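/- The function f is the unique solution, in the class of bounded functions defined at every point of (0,1], of the system of functional equations h(x) = r_{g_1(x)} + u_{g_1(x)} · h(ω(x)) for all x ∈ (0,1]; i.e., if h : (0,1] → ℝ is bounded and satisfies h(x) = r_{g_1(x)} + u_{g_1(x)} · h(ω(x)) for every x ∈ (0,1], then h = f on (0,1]. -/

import Mathlib

open scoped BigOperators

/-- The value `Δ^E_g` of the Engel series with digit sequence `g`
(`g n` is the paper's `g_{n+1}`). -/
noncomputable def engelSum (g : ℕ → ℕ) : ℝ :=
  ∑' n : ℕ, ∏ k ∈ Finset.range (n + 1),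
    ((2 : ℝ) + ∑ i ∈ Finset.range (k + 1), (g i : ℝ))⁻¹


lemma half_summable : Summable (fun n : ℕ => (1/2:ℝ)^(n+1)) := by
  have h := (summable_geometric_of_lt_one (by norm_num : (0:ℝ) ≤ 1/2)
    (by norm_num : (1/2:ℝ) < 1)).mul_right (1/2)
  exact h.congr fun n => by rw [pow_succ]

lemma engel_term_pos (g : ℕ → ℕ) (n : ℕ) :
    0 < ∏ k ∈ Finset.range (n + 1),
      ((2 : ℝ) + ∑ i ∈ Finset.range (k + 1), (g i : ℝ))⁻¹ := by
  apply Finset.prod_pos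
  intro k _
  have : (0:ℝ) < 2 + ∑ i ∈ Finset.range (k + 1), (g i : ℝ) := by
    positivity
  exact inv_pos.mpr this

lemma engel_term_le (g : ℕ → ℕ) (n : ℕ) :
    ∏ k ∈ Finset.range (n + 1),
      ((2 : ℝ) + ∑ i ∈ Finset.range (k + 1), (g i : ℝ))⁻¹ ≤ (1/2) ^ (n+1) := by
  calc ∏ k ∈ Finset.range (n + 1),
      ((2 : ℝ) + ∑ i ∈ Finset.range (k + 1), (g i : ℝ))⁻¹
      ≤ ∏ k ∈ Finset.range (n + 1), (1/2 : ℝ) := by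
        apply Finset.prod_le_prod
        · intro k _; exact le_of_lt (inv_pos.mpr (by positivity))
        · intro k _
          rw [one_div]
          apply inv_anti₀ (by norm_num)
          have : (0:ℝ) ≤ ∑ i ∈ Finset.range (k + 1), (g i : ℝ) := by positivity
          linarith
    _ = (1/2)^(n+1) := by rw [Finset.prod_const, Finset.card_range]

lemma engel_summable (g : ℕ → ℕ) :
    Summable (fun n : ℕ => ∏ k ∈ Finset.range (n + 1),
      ((2 : ℝ) + ∑ i ∈ Finset.range (k + 1), (g i : ℝ))⁻¹) := by
  apply Summable.of_nonneg_of_le (fun n => (engel_term_pos g n).le) (engel_term_le g)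
  exact half_summable

lemma engelSum_mem (g : ℕ → ℕ) : engelSum g ∈ Set.Ioc (0:ℝ) 1 := by
  constructor
  · have := Summable.le_tsum (engel_summable g) 0 (fun n _ => (engel_term_pos g n).le)
    calc (0:ℝ) < _ := engel_term_pos g 0
      _ ≤ engelSum g := this
  · have h1 : engelSum g ≤ ∑' n : ℕ, (1/2:ℝ)^(n+1) := by
      apply Summable.tsum_le_tsum (engel_term_le g) (engel_summable g)
      exact half_summable
    have h2 : ∑' n : ℕ, (1/2:ℝ)^(n+1) = 1 := by
      have := tsum_geometric_of_lt_one (by norm_num : (0:ℝ) ≤ 1/2) (by norm_num)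
      calc ∑' n : ℕ, (1/2:ℝ)^(n+1) = ∑' n : ℕ, (1/2) * (1/2:ℝ)^n := by
            congr 1; funext n; ring
        _ = (1/2) * ∑' n : ℕ, (1/2:ℝ)^n := tsum_mul_left
        _ = 1 := by rw [this]; norm_num
    linarith

/-- The value of the series `r_{g_1} + ∑_{k≥2} r_{g_k} ∏_{i=1}^{k-1} u_{g_i}`
defining `f` on the digit sequence `g`. -/
noncomputable def fSeries (u r : ℕ → ℝ) (g : ℕ → ℕ) : ℝ :=
  r (g 0) + ∑' k : ℕ, r (g (k + 1)) * ∏ i ∈ Finset.range (k + 1), u (g i)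

lemma exists_q (u : ℕ → ℝ) (hu_sum : HasSum u 1) (hu_abs : ∀ n, |u n| < 1) :
    ∃ q : ℝ, 0 ≤ q ∧ q < 1 ∧ ∀ n, |u n| ≤ q := by
  have h0 : Filter.Tendsto u Filter.atTop (nhds 0) := hu_sum.summable.tendsto_atTop_zero
  have habs : Filter.Tendsto (fun n => |u n|) Filter.atTop (nhds 0) := by
    simpa using h0.abs
  have : ∀ᶠ n in Filter.atTop, |u n| < 1/2 :=
    habs.eventually_lt_const (by norm_num)
  obtain ⟨N, hN⟩ := Filter.eventually_atTop.mp this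
  set q : ℝ := (Finset.range (N+1)).sup' (by simp) (fun n => max (|u n|) (1/2)) with hq
  refine ⟨q, ?_, ?_, ?_⟩
  · have : max (|u 0|) (1/2) ≤ q := Finset.le_sup' (fun n => max (|u n|) (1/2)) (by simp)
    have : (1/2:ℝ) ≤ q := le_trans (le_max_right _ _) this
    linarith
  · rw [hq, Finset.sup'_lt_iff]
    intro n _
    exact max_lt (hu_abs n) (by norm_num)
  · intro n
    by_cases hn : n ≤ N
    · have : max (|u n|) (1/2) ≤ q :=
        Finset.le_sup' (fun n => max (|u n|) (1/2)) (Finset.mem_range.mpr (Nat.lt_succ_of_le hn))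
      exact le_trans (le_max_left _ _) this
    · have h1 : |u n| < 1/2 := hN n (le_of_not_ge hn)
      have : max (|u N|) (1/2) ≤ q := Finset.le_sup' (fun n => max (|u n|) (1/2)) (by simp)
      have : (1/2:ℝ) ≤ q := le_trans (le_max_right _ _) this
      linarith

section fser
variable (u r : ℕ → ℝ) (q : ℝ) (hq0 : 0 ≤ q) (hq1 : q < 1)
  (hu : ∀ n, |u n| ≤ q) (hr1 : ∀ n, |r n| ≤ 1)

include hq0 hq1 hu hr1 in
lemma fseries_term_bound (g : ℕ → ℕ) (k m : ℕ) :
    |r (g m) * ∏ i ∈ Finset.range k, u (g i)| ≤ q ^ k := by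
  rw [abs_mul, Finset.abs_prod]
  calc |r (g m)| * ∏ i ∈ Finset.range k, |u (g i)|
      ≤ 1 * ∏ i ∈ Finset.range k, q := by
        apply mul_le_mul (hr1 _) ?_ ?_ zero_le_one
        · exact Finset.prod_le_prod (fun i _ => abs_nonneg _) (fun i _ => hu _)
        · exact Finset.prod_nonneg fun i _ => abs_nonneg _
    _ = q ^ k := by rw [one_mul, Finset.prod_const, Finset.card_range]

include hq0 hq1 hu hr1 in
lemma fseries_summable (g : ℕ → ℕ) :
    Summable (fun k : ℕ => r (g (k + 1)) * ∏ i ∈ Finset.range (k + 1), u (g i)) := by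
  apply Summable.of_abs
  apply Summable.of_nonneg_of_le (fun k => abs_nonneg _)
    (fun k => fseries_term_bound u r q hq0 hq1 hu hr1 g (k+1) (k+1))
  have h := (summable_geometric_of_lt_one hq0 hq1).mul_right q
  exact h.congr fun n => by rw [pow_succ]

include hq0 hq1 hu hr1 in
lemma fseries_bound (g : ℕ → ℕ) : |fSeries u r g| ≤ 1 + (1 - q)⁻¹ := by
  have hs := fseries_summable u r q hq0 hq1 hu hr1 g
  have h1 : |∑' k : ℕ, r (g (k + 1)) * ∏ i ∈ Finset.range (k + 1), u (g i)|
      ≤ ∑' k : ℕ, q ^ (k+1) := by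
    calc |∑' k : ℕ, r (g (k + 1)) * ∏ i ∈ Finset.range (k + 1), u (g i)|
        ≤ ∑' k : ℕ, |r (g (k + 1)) * ∏ i ∈ Finset.range (k + 1), u (g i)| := by
          have h2 : ‖∑' k : ℕ, r (g (k + 1)) * ∏ i ∈ Finset.range (k + 1), u (g i)‖
              ≤ ∑' k : ℕ, ‖r (g (k + 1)) * ∏ i ∈ Finset.range (k + 1), u (g i)‖ :=
            norm_tsum_le_tsum_norm (by simpa only [Real.norm_eq_abs] using hs.abs)
          simpa only [Real.norm_eq_abs] using h2
      _ ≤ ∑' k : ℕ, q ^ (k+1) := by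
          apply Summable.tsum_le_tsum (fun k => fseries_term_bound u r q hq0 hq1 hu hr1 g (k+1) (k+1))
            hs.abs
          exact ((summable_geometric_of_lt_one hq0 hq1).mul_right q).congr
            fun n => by rw [pow_succ]
  have h2 : ∑' k : ℕ, q ^ (k+1) ≤ (1-q)⁻¹ := by
    calc ∑' k : ℕ, q ^ (k+1) ≤ ∑' k : ℕ, q ^ k := by
          apply Summable.tsum_le_tsum (fun k => pow_le_pow_of_le_one hq0 hq1.le (Nat.le_succ k))
            (((summable_geometric_of_lt_one hq0 hq1).mul_right q).congr
              fun n => by rw [pow_succ])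
            (summable_geometric_of_lt_one hq0 hq1)
      _ = (1-q)⁻¹ := tsum_geometric_of_lt_one hq0 hq1
  have := abs_add_le (r (g 0)) (∑' k : ℕ, r (g (k + 1)) * ∏ i ∈ Finset.range (k + 1), u (g i))
  unfold fSeries
  have := hr1 (g 0)
  calc |r (g 0) + ∑' k : ℕ, r (g (k + 1)) * ∏ i ∈ Finset.range (k + 1), u (g i)|
      ≤ |r (g 0)| + |∑' k : ℕ, r (g (k + 1)) * ∏ i ∈ Finset.range (k + 1), u (g i)| :=
        abs_add_le _ _
    _ ≤ 1 + (1-q)⁻¹ := by linarith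

include hq0 hq1 hu hr1 in
lemma fseries_shift (g : ℕ → ℕ) :
    fSeries u r g = r (g 0) + u (g 0) * fSeries u r (fun n => g (n + 1)) := by
  have hb : Summable (fun k : ℕ => r (g (k + 1)) * ∏ i ∈ Finset.range k, u (g (i + 1))) := by
    apply Summable.of_abs
    apply Summable.of_nonneg_of_le (fun k => abs_nonneg _)
      (fun k => fseries_term_bound u r q hq0 hq1 hu hr1 (fun n => g (n+1)) k k)
    exact summable_geometric_of_lt_one hq0 hq1
  have key : (∑' k : ℕ, r (g (k + 1)) * ∏ i ∈ Finset.range (k + 1), u (g i))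
      = u (g 0) * ∑' k : ℕ, r (g (k + 1)) * ∏ i ∈ Finset.range k, u (g (i + 1)) := by
    rw [← tsum_mul_left]
    congr 1; funext k
    rw [Finset.prod_range_succ']
    ring
  have split : (∑' k : ℕ, r (g (k + 1)) * ∏ i ∈ Finset.range k, u (g (i + 1)))
      = r (g 1) + ∑' k : ℕ, r (g (k + 2)) * ∏ i ∈ Finset.range (k + 1), u (g (i + 1)) := by
    rw [Summable.tsum_eq_zero_add hb]
    simp
  unfold fSeries
  rw [key, split]
end fser

/-- `rpred r n = r (n-1)`, with the convention `r (-1) = 1`. -/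
noncomputable def rpred (r : ℕ → ℝ) (n : ℕ) : ℝ := if n = 0 then 1 else r (n - 1)

/-- f is the unique bounded solution on (0,1] of the system
h(x) = r_{g₁(x)} + u_{g₁(x)} · h(ω(x)). -/
theorem stmt7
    (u r : ℕ → ℝ)
    (hu_sum : HasSum u 1)
    (hu_abs : ∀ n, |u n| < 1)
    (hr : ∀ n, r n = 1 - ∑ i ∈ Finset.range (n + 1), u i)
    (hr01 : ∀ n, 0 < r n ∧ r n < 1)
    (G : ℝ → ℕ → ℕ)
    (hG : ∀ x ∈ Set.Ioc (0:ℝ) 1, engelSum (G x) = x)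
    (hGuniq : ∀ x ∈ Set.Ioc (0:ℝ) 1, ∀ g : ℕ → ℕ, engelSum g = x → g = G x)
    (f : ℝ → ℝ)
    (hf : ∀ x ∈ Set.Ioc (0:ℝ) 1, f x = fSeries u r (G x))
    (hf0 : f 0 = 0)
    (h : ℝ → ℝ)
    (hbd : ∃ C : ℝ, ∀ x ∈ Set.Ioc (0:ℝ) 1, |h x| ≤ C)
    (heq : ∀ x ∈ Set.Ioc (0:ℝ) 1,
      h x = r (G x 0) + u (G x 0) * h (engelSum (fun n => G x (n + 1)))) :
    ∀ x ∈ Set.Ioc (0:ℝ) 1, h x = f x := by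
  obtain ⟨q, hq0, hq1, hu⟩ := exists_q u hu_sum hu_abs
  have hr1 : ∀ n, |r n| ≤ 1 := fun n =>
    abs_le.mpr ⟨by linarith [(hr01 n).1], (hr01 n).2.le⟩
  obtain ⟨C, hC⟩ := hbd
  have h1mem : (1:ℝ) ∈ Set.Ioc (0:ℝ) 1 := ⟨zero_lt_one, le_refl 1⟩
  have hC0 : 0 ≤ C := le_trans (abs_nonneg _) (hC 1 h1mem)
  set B : ℝ := C + (1 + (1-q)⁻¹) with hB
  have hB0 : 0 ≤ B := by
    have : (0:ℝ) < (1-q)⁻¹ := inv_pos.mpr (by linarith)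
    rw [hB]; linarith
  have hfb : ∀ x ∈ Set.Ioc (0:ℝ) 1, |f x| ≤ 1 + (1-q)⁻¹ := fun x hx => by
    rw [hf x hx]; exact fseries_bound u r q hq0 hq1 hu hr1 (G x)
  have hfeq : ∀ x ∈ Set.Ioc (0:ℝ) 1,
      f x = r (G x 0) + u (G x 0) * f (engelSum (fun n => G x (n + 1))) := by
    intro x hx
    set y := engelSum (fun n => G x (n + 1)) with hy
    have hymem : y ∈ Set.Ioc (0:ℝ) 1 := engelSum_mem _
    have hGy : (fun n => G x (n + 1)) = G y := hGuniq y hymem _ rfl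
    rw [hf x hx, hf y hymem, ← hGy]
    exact fseries_shift u r q hq0 hq1 hu hr1 (G x)
  have key : ∀ n : ℕ, ∀ x ∈ Set.Ioc (0:ℝ) 1, |h x - f x| ≤ B * q ^ n := by
    intro n
    induction n with
    | zero =>
      intro x hx
      have := hC x hx
      have := hfb x hx
      have habs := abs_sub (h x) (f x)
      simp only [pow_zero, mul_one, hB]
      calc |h x - f x| ≤ |h x| + |f x| := abs_sub _ _
        _ ≤ C + (1 + (1-q)⁻¹) := by linarith
    | succ n ih =>
      intro x hx
      set y := engelSum (fun n => G x (n + 1)) with hy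
      have hymem : y ∈ Set.Ioc (0:ℝ) 1 := engelSum_mem _
      have hdiff : h x - f x = u (G x 0) * (h y - f y) := by
        rw [heq x hx, hfeq x hx]; ring
      calc |h x - f x| = |u (G x 0)| * |h y - f y| := by rw [hdiff, abs_mul]
        _ ≤ q * (B * q ^ n) := by
            apply mul_le_mul (hu _) (ih y hymem) (abs_nonneg _) hq0
        _ = B * q ^ (n + 1) := by ring
  intro x hx
  have htend : Filter.Tendsto (fun n : ℕ => B * q ^ n) Filter.atTop (nhds 0) := by
    have := tendsto_pow_atTop_nhds_zero_of_lt_one hq0 hq1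
    simpa using this.const_mul B
  have hle : |h x - f x| ≤ 0 :=
    ge_of_tendsto' htend (fun n => key n x hx)
  have : h x - f x = 0 := abs_eq_zero.mp (le_antisymm hle (abs_nonneg _))
  linarith
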